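/- Define p_{y,x}(n) = (1/A(y,x)) ∑_{j=0}^{n-1} |∑_{y ≤ k ≤ x} a_k² cos(2π j_k · j/n)| where A(y,x) = ∑_{y ≤ k ≤ x} a_k² > 0, (j_k) distinct positive integers. Then p_{y,x}(n) ≤ (1/A(y,x))·( n·(∑_{y ≤ k ≤ x} a_k⁴)^{1/2} + 2π ∑_{y ≤ k ≤ x} j_k a_k² ). -/

import Mathlib

open Real

lemma myAbsSin (u : ℝ) : |Real.sin u| ≤ |u| := by
  have key : ∀ v : ℝ, 0 ≤ v → |Real.sin v| ≤ v := by
    intro v hv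
    rcases le_total v 1 with h1 | h1
    · rw [abs_of_nonneg (Real.sin_nonneg_of_nonneg_of_le_pi hv
        (h1.trans (by linarith [Real.pi_gt_three])))]
      exact Real.sin_le hv
    · exact abs_le.2 ⟨by linarith [Real.neg_one_le_sin v], by linarith [Real.sin_le_one v]⟩
  rcases le_total 0 u with h | h
  · rw [abs_of_nonneg h]; exact key u h
  · rw [abs_of_nonpos h]
    have h2 := key (-u) (by linarith)
    rwa [Real.sin_neg, abs_neg] at h2

lemma myCosLip (s t : ℝ) : |Real.cos s - Real.cos t| ≤ |s - t| := by
  rw [Real.cos_sub_cos]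
  have ha := Real.abs_sin_le_one ((s+t)/2)
  have hb := myAbsSin ((s-t)/2)
  have h0 := abs_nonneg (Real.sin ((s+t)/2))
  have h1 := abs_nonneg (Real.sin ((s-t)/2))
  calc |(-2) * Real.sin ((s+t)/2) * Real.sin ((s-t)/2)|
      = 2 * |Real.sin ((s+t)/2)| * |Real.sin ((s-t)/2)| := by
        rw [abs_mul, abs_mul]; norm_num
    _ ≤ 2 * 1 * |(s-t)/2| := by nlinarith
    _ = |s - t| := by rw [abs_div, abs_two]; ring

lemma myIntCos (m : ℤ) (hm : m ≠ 0) :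
    ∫ u in (0:ℝ)..1, Real.cos (2*π*(m:ℝ)*u) = 0 := by
  have hc : (2*π*(m:ℝ)) ≠ 0 :=
    mul_ne_zero (mul_ne_zero two_ne_zero Real.pi_ne_zero) (Int.cast_ne_zero.2 hm)
  have h := intervalIntegral.integral_comp_mul_left (a := 0) (b := 1) Real.cos hc
  rw [h, mul_zero, mul_one, integral_cos, Real.sin_zero, sub_zero]
  have h2 : (2*π*(m:ℝ)) = ((2*m : ℤ):ℝ) * π := by push_cast; ring
  rw [h2, Real.sin_int_mul_pi, smul_zero]

lemma myOrth (m m' : ℕ) (hm : 0 < m) (hm' : 0 < m') :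
    ∫ u in (0:ℝ)..1, Real.cos (2*π*(m:ℝ)*u) * Real.cos (2*π*(m':ℝ)*u)
      = if m = m' then 1/2 else 0 := by
  have hrw : ∀ u : ℝ, Real.cos (2*π*(m:ℝ)*u) * Real.cos (2*π*(m':ℝ)*u)
      = (Real.cos (2*π*(((m:ℤ)-(m':ℤ)):ℝ)*u) + Real.cos (2*π*(((m:ℤ)+(m':ℤ)):ℝ)*u))/2 := by
    intro u
    have h1 : 2*π*(((m:ℤ)-(m':ℤ)):ℝ)*u = 2*π*(m:ℝ)*u - 2*π*(m':ℝ)*u := by push_cast; ring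
    have h2 : 2*π*(((m:ℤ)+(m':ℤ)):ℝ)*u = 2*π*(m:ℝ)*u + 2*π*(m':ℝ)*u := by push_cast; ring
    rw [h1, h2]
    have h3 := Real.two_mul_cos_mul_cos (2*π*(m:ℝ)*u) (2*π*(m':ℝ)*u)
    linarith
  simp only [hrw]
  rw [intervalIntegral.integral_div,
    intervalIntegral.integral_add (Continuous.intervalIntegrable (by fun_prop) 0 1)
      (Continuous.intervalIntegrable (by fun_prop) 0 1)]
  have hz2 := myIntCos ((m:ℤ)+(m':ℤ)) (by positivity)
  push_cast at hz2 ⊢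
  rw [hz2]
  by_cases h : m = m'
  · subst h
    simp
  · have hz1 := myIntCos ((m:ℤ)-(m':ℤ)) (sub_ne_zero.2 (by exact_mod_cast h))
    push_cast at hz1
    rw [hz1]
    simp [h]

lemma myL1L2 {f : ℝ → ℝ} (hf : Continuous f) :
    ∫ u in (0:ℝ)..1, |f u| ≤ Real.sqrt (∫ u in (0:ℝ)..1, f u ^ 2) := by
  set I := ∫ u in (0:ℝ)..1, |f u| with hIdef
  set J := ∫ u in (0:ℝ)..1, f u ^ 2 with hJdef
  have hInn : 0 ≤ I :=
    intervalIntegral.integral_nonneg (by norm_num) (fun u _ => abs_nonneg _)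
  have hexp : ∫ u in (0:ℝ)..1, (|f u| - I)^2 = J - I^2 := by
    have h1 : ∀ u : ℝ, (|f u| - I)^2 = (f u^2 - (2*I)*|f u|) + I^2 := by
      intro u
      have h := sq_abs (f u)
      calc (|f u| - I)^2 = (|f u|^2 - (2*I)*|f u|) + I^2 := by ring
        _ = (f u^2 - (2*I)*|f u|) + I^2 := by rw [sq_abs]
    simp only [h1]
    rw [intervalIntegral.integral_add (Continuous.intervalIntegrable (by fun_prop) 0 1)
        (Continuous.intervalIntegrable (by fun_prop) 0 1),
      intervalIntegral.integral_sub (Continuous.intervalIntegrable (by fun_prop) 0 1)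
        (Continuous.intervalIntegrable (by fun_prop) 0 1),
      intervalIntegral.integral_const_mul, intervalIntegral.integral_const]
    rw [← hIdef, ← hJdef]
    simp only [smul_eq_mul]
    ring
  have hpos : 0 ≤ J - I^2 := by
    rw [← hexp]
    exact intervalIntegral.integral_nonneg (by norm_num) (fun u _ => sq_nonneg _)
  have hJ : 0 ≤ J := by nlinarith [sq_nonneg I]
  exact (Real.le_sqrt hInn hJ).2 (by linarith)

lemma myL2 (F : Finset ℕ) (a : ℕ → ℝ) (jk : ℕ → ℕ) (hjk : ∀ k, 0 < jk k)
    (hinj : Set.InjOn jk (F : Set ℕ)) :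
    ∫ u in (0:ℝ)..1, (∑ k ∈ F, a k ^ 2 * Real.cos (2*π*(jk k:ℝ)*u)) ^ 2
      = (∑ k ∈ F, a k ^ 4) / 2 := by
  have hrw : ∀ u : ℝ, (∑ k ∈ F, a k ^ 2 * Real.cos (2*π*(jk k:ℝ)*u)) ^ 2
      = ∑ k ∈ F, ∑ l ∈ F,
          (a k^2 * a l^2) * (Real.cos (2*π*(jk k:ℝ)*u) * Real.cos (2*π*(jk l:ℝ)*u)) := by
    intro u
    rw [sq, Finset.sum_mul_sum]
    exact Finset.sum_congr rfl fun k _ => Finset.sum_congr rfl fun l _ => by ring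
  simp only [hrw]
  rw [intervalIntegral.integral_finset_sum (fun k _ => Continuous.intervalIntegrable
      (by fun_prop) 0 1)]
  have hstep : ∀ k ∈ F, (∫ u in (0:ℝ)..1, ∑ l ∈ F,
      (a k^2 * a l^2) * (Real.cos (2*π*(jk k:ℝ)*u) * Real.cos (2*π*(jk l:ℝ)*u)))
      = a k ^ 4 / 2 := by
    intro k hk
    rw [intervalIntegral.integral_finset_sum (fun l _ => Continuous.intervalIntegrable
        (by fun_prop) 0 1)]
    have hterm : ∀ l ∈ F, (∫ u in (0:ℝ)..1,
        (a k^2 * a l^2) * (Real.cos (2*π*(jk k:ℝ)*u) * Real.cos (2*π*(jk l:ℝ)*u)))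
        = (a k^2 * a l^2) * (if jk k = jk l then (1:ℝ)/2 else 0) := by
      intro l hl
      rw [intervalIntegral.integral_const_mul, myOrth _ _ (hjk k) (hjk l)]
    rw [Finset.sum_congr rfl hterm]
    rw [Finset.sum_eq_single k]
    · rw [if_pos rfl]; ring
    · intro l hl hne
      rw [if_neg fun hcon => hne (hinj (Finset.mem_coe.2 hl) (Finset.mem_coe.2 hk) hcon.symm)]
      ring
    · intro hcon; exact absurd hk hcon
  rw [Finset.sum_congr rfl hstep, Finset.sum_div]

theorem stmt6 (a : ℕ → ℝ) (jk : ℕ → ℕ) (hjk : ∀ k, 0 < jk k)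
    (y x : ℕ) (hy : 1 ≤ y) (hyx : y ≤ x)
    (hinj : Set.InjOn jk (Finset.Icc y x : Set ℕ))
    (hA : 0 < ∑ k ∈ Finset.Icc y x, a k ^ 2) (n : ℕ) (hn : 0 < n) :
    (1 / ∑ k ∈ Finset.Icc y x, a k ^ 2) * ∑ j ∈ Finset.range n,
        |∑ k ∈ Finset.Icc y x, a k ^ 2 * Real.cos (2 * π * jk k * ((j:ℝ) / n))|
      ≤ (1 / ∑ k ∈ Finset.Icc y x, a k ^ 2) *
          ((n:ℝ) * Real.sqrt (∑ k ∈ Finset.Icc y x, a k ^ 4)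
            + 2 * π * ∑ k ∈ Finset.Icc y x, (jk k : ℝ) * a k ^ 2) := by
  set F := Finset.Icc y x with hF
  set f : ℝ → ℝ := fun u => ∑ k ∈ F, a k ^ 2 * Real.cos (2*π*(jk k:ℝ)*u) with hfdef
  set L : ℝ := 2 * π * ∑ k ∈ F, (jk k : ℝ) * a k ^ 2 with hLdef
  have hfc : Continuous f := by
    apply continuous_finset_sum
    intro k _
    fun_prop
  have hLip : ∀ u v : ℝ, |f u - f v| ≤ L * |u - v| := by
    intro u v
    have h1 : f u - f v = ∑ k ∈ F, a k ^ 2 * (Real.cos (2*π*(jk k:ℝ)*u)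
        - Real.cos (2*π*(jk k:ℝ)*v)) := by
      rw [hfdef]
      simp [Finset.sum_sub_distrib, mul_sub]
    rw [h1]
    calc |∑ k ∈ F, a k ^ 2 * (Real.cos (2*π*(jk k:ℝ)*u) - Real.cos (2*π*(jk k:ℝ)*v))|
        ≤ ∑ k ∈ F, |a k ^ 2 * (Real.cos (2*π*(jk k:ℝ)*u) - Real.cos (2*π*(jk k:ℝ)*v))| :=
          Finset.abs_sum_le_sum_abs _ _
      _ ≤ ∑ k ∈ F, a k ^ 2 * (2*π*(jk k:ℝ)*|u - v|) := by
          apply Finset.sum_le_sum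
          intro k _
          rw [abs_mul, abs_of_nonneg (sq_nonneg (a k))]
          apply mul_le_mul_of_nonneg_left _ (sq_nonneg (a k))
          calc |Real.cos (2*π*(jk k:ℝ)*u) - Real.cos (2*π*(jk k:ℝ)*v)|
              ≤ |2*π*(jk k:ℝ)*u - 2*π*(jk k:ℝ)*v| := myCosLip _ _
            _ = 2*π*(jk k:ℝ)*|u - v| := by
                rw [← mul_sub, abs_mul]
                congr 1
                exact abs_of_nonneg (by positivity)
      _ = (∑ k ∈ F, (jk k:ℝ) * a k ^ 2) * (2*π*|u - v|) := by
          rw [Finset.sum_mul]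
          exact Finset.sum_congr rfl fun k _ => by ring
      _ = L * |u - v| := by rw [hLdef]; ring
  have hL0 : 0 ≤ L := by
    rw [hLdef]
    have hπ := Real.pi_pos
    exact mul_nonneg (by positivity) (Finset.sum_nonneg fun k _ => by positivity)
  have hn' : (0:ℝ) < n := by exact_mod_cast hn
  have hstep : ∀ j ∈ Finset.range n, |f ((j:ℝ)/n)| / n
      ≤ (∫ u in ((j:ℝ)/n)..(((j:ℝ)+1)/n), |f u|) + L / n^2 := by
    intro j hj
    have hab : (j:ℝ)/n ≤ ((j:ℝ)+1)/n := by
      gcongr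
      linarith
    have hmono : ∫ u in ((j:ℝ)/n)..(((j:ℝ)+1)/n), |f ((j:ℝ)/n)|
        ≤ ∫ u in ((j:ℝ)/n)..(((j:ℝ)+1)/n), (|f u| + L / n) := by
      apply intervalIntegral.integral_mono_on hab
        (continuous_const.intervalIntegrable _ _)
        ((hfc.abs.add continuous_const).intervalIntegrable _ _)
      intro u hu
      have h1 : |f ((j:ℝ)/n)| - |f u| ≤ |f ((j:ℝ)/n) - f u| := abs_sub_abs_le_abs_sub _ _
      have h2 : |f ((j:ℝ)/n) - f u| ≤ L * |(j:ℝ)/n - u| := hLip _ _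
      have h3 : |(j:ℝ)/n - u| ≤ 1/n := by
        rw [abs_sub_comm, abs_of_nonneg (by linarith [hu.1])]
        have h := hu.2
        rw [show ((j:ℝ)+1)/n = (j:ℝ)/n + 1/n by ring] at h
        linarith
      have h4 : L * |(j:ℝ)/n - u| ≤ L * (1/n) := mul_le_mul_of_nonneg_left h3 hL0
      have h5 : L * (1/n) = L / n := by ring
      show |f ((j:ℝ)/n)| ≤ |f u| + L / n
      linarith
    rw [intervalIntegral.integral_add (hfc.abs.intervalIntegrable _ _)
      (continuous_const.intervalIntegrable _ _)] at hmono
    have hlen : ((j:ℝ)+1)/n - (j:ℝ)/n = 1/n := by ring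
    simp only [intervalIntegral.integral_const, smul_eq_mul, hlen] at hmono
    have e1 : 1/(n:ℝ) * |f ((j:ℝ)/n)| = |f ((j:ℝ)/n)| / n := by ring
    have e2 : 1/(n:ℝ) * (L / n) = L / n^2 := by ring
    linarith
  have hsum : ∑ j ∈ Finset.range n, (∫ u in ((j:ℝ)/n)..(((j:ℝ)+1)/n), |f u|)
      = ∫ u in (0:ℝ)..1, |f u| := by
    have h := intervalIntegral.sum_integral_adjacent_intervals
      (μ := MeasureTheory.volume) (a := fun j : ℕ => (j:ℝ)/n) (n := n) (f := fun u => |f u|)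
      (fun k _ => hfc.abs.intervalIntegrable _ _)
    simp only [Nat.cast_zero, zero_div] at h
    rw [div_self (ne_of_gt hn')] at h
    rw [← h]
    exact Finset.sum_congr rfl fun j _ => by norm_num
  have hkey : ∑ j ∈ Finset.range n, |f ((j:ℝ)/n)|
      ≤ (n:ℝ) * (∫ u in (0:ℝ)..1, |f u|) + L := by
    have h5 : ∑ j ∈ Finset.range n, |f ((j:ℝ)/n)| / n
        ≤ (∫ u in (0:ℝ)..1, |f u|) + (n:ℝ) * (L / n^2) := by
      calc ∑ j ∈ Finset.range n, |f ((j:ℝ)/n)| / n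
          ≤ ∑ j ∈ Finset.range n, ((∫ u in ((j:ℝ)/n)..(((j:ℝ)+1)/n), |f u|) + L / n^2) :=
            Finset.sum_le_sum hstep
        _ = (∫ u in (0:ℝ)..1, |f u|) + (n:ℝ) * (L / n^2) := by
            rw [Finset.sum_add_distrib, hsum, Finset.sum_const, Finset.card_range,
              nsmul_eq_mul]
    have h6 : ∑ j ∈ Finset.range n, |f ((j:ℝ)/n)| / n
        = (∑ j ∈ Finset.range n, |f ((j:ℝ)/n)|) / n := by
      rw [Finset.sum_div]
    have h7 : (n:ℝ) * (L / n^2) = L / n := by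
      field_simp
    rw [h6, h7] at h5
    have h8 := mul_le_mul_of_nonneg_left h5 (le_of_lt hn')
    rw [mul_div_cancel₀ _ (ne_of_gt hn')] at h8
    calc ∑ j ∈ Finset.range n, |f ((j:ℝ)/n)|
        ≤ (n:ℝ) * ((∫ u in (0:ℝ)..1, |f u|) + L / n) := h8
      _ = (n:ℝ) * (∫ u in (0:ℝ)..1, |f u|) + (n:ℝ) * (L / n) := by ring
      _ = (n:ℝ) * (∫ u in (0:ℝ)..1, |f u|) + L := by
          rw [mul_div_cancel₀ _ (ne_of_gt hn')]
  have hint : ∫ u in (0:ℝ)..1, |f u| ≤ Real.sqrt (∑ k ∈ F, a k ^ 4) := by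
    calc ∫ u in (0:ℝ)..1, |f u| ≤ Real.sqrt (∫ u in (0:ℝ)..1, f u ^ 2) := myL1L2 hfc
      _ = Real.sqrt ((∑ k ∈ F, a k ^ 4) / 2) := by rw [myL2 F a jk hjk hinj]
      _ ≤ Real.sqrt (∑ k ∈ F, a k ^ 4) := by
          apply Real.sqrt_le_sqrt
          have h9 : 0 ≤ ∑ k ∈ F, a k ^ 4 := Finset.sum_nonneg fun k _ => by positivity
          linarith
  apply mul_le_mul_of_nonneg_left _ (by positivity)
  calc ∑ j ∈ Finset.range n, |∑ k ∈ F, a k ^ 2 * Real.cos (2 * π * (jk k:ℝ) * ((j:ℝ) / n))|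
      = ∑ j ∈ Finset.range n, |f ((j:ℝ)/n)| := rfl
    _ ≤ (n:ℝ) * (∫ u in (0:ℝ)..1, |f u|) + L := hkey
    _ ≤ (n:ℝ) * Real.sqrt (∑ k ∈ F, a k ^ 4) + L := by
        have h10 := mul_le_mul_of_nonneg_left hint (le_of_lt hn')
        linarith
    _ = (n:ℝ) * Real.sqrt (∑ k ∈ F, a k ^ 4) + 2 * π * ∑ k ∈ F, (jk k : ℝ) * a k ^ 2 := rfl
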